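/- Let n be a positive integer with n ≡ 0 (mod 15), and let G be the blowup W5^3[n/3, 2n/15, 2n/15, 2n/15, 2n/15, 2n/15] of the 3-uniform 5-wheel obtained by replacing the center u by a set of size n/3, each rim vertex v_i by a set of size 2n/15, and each edge by the corresponding complete 3-partite 3-graph. Then G is an n-vertex 3-graph which is {K4^{3-}, F5}-free, has minimum degree δ(G) = 4n²/45, and is not 3-partite. -/

import Mathlib

open Finset

section Defs

variable {V : Type*} [DecidableEq V]

/-- The degree of a vertex `v` in the 3-graph `H`: the number of edges containing `v`. -/
def degH (H : Finset (Finset V)) (v : V) : ℕ :=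
  (H.filter fun e => v ∈ e).card

/-- `H` contains a copy of the generalized triangle `F₅ = {abc, abd, cde}`. -/
def HasF5 (H : Finset (Finset V)) : Prop :=
  ∃ a b c d e : V,
    a ≠ b ∧ a ≠ c ∧ a ≠ d ∧ a ≠ e ∧ b ≠ c ∧ b ≠ d ∧ b ≠ e ∧ c ≠ d ∧ c ≠ e ∧ d ≠ e ∧
    ({a, b, c} : Finset V) ∈ H ∧ ({a, b, d} : Finset V) ∈ H ∧ ({c, d, e} : Finset V) ∈ H

/-- `H` contains a copy of `K₄³⁻ = {abc, abd, acd}`. -/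
def HasK43m (H : Finset (Finset V)) : Prop :=
  ∃ a b c d : V,
    a ≠ b ∧ a ≠ c ∧ a ≠ d ∧ b ≠ c ∧ b ≠ d ∧ c ≠ d ∧
    ({a, b, c} : Finset V) ∈ H ∧ ({a, b, d} : Finset V) ∈ H ∧ ({a, c, d} : Finset V) ∈ H

/-- `H` is 3-partite: the vertex set can be partitioned into three parts so that every
edge has at most one vertex in each part. -/
def Tripartite (H : Finset (Finset V)) : Prop :=
  ∃ P : V → Fin 3, ∀ e ∈ H, ∀ u ∈ e, ∀ v ∈ e, u ≠ v → P u ≠ P v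

/-- The shadow graph `∂H` of the 3-graph `H`: two distinct vertices are adjacent iff
they lie in a common edge of `H`. -/
def shadowG (H : Finset (Finset V)) : SimpleGraph V where
  Adj u v := u ≠ v ∧ ∃ e ∈ H, u ∈ e ∧ v ∈ e
  symm := by
    constructor
    rintro u v ⟨hne, e, he, hu, hv⟩
    exact ⟨hne.symm, e, he, hv, hu⟩
  loopless := by constructor; rintro u ⟨hne, -⟩; exact hne rfl

end Defs

/-- The blowup `W₅³[n/3, 2n/15, …, 2n/15]` of the 3-uniform 5-wheel: the center `u` is
replaced by `Fin (n/3)`, the rim vertex `vᵢ` by `{i} × Fin (2n/15)`, and every edge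
`u vᵢ v_{i+1}` by the corresponding complete 3-partite 3-graph (indices mod 5). -/
def wheelBlowup (n : ℕ) : Finset (Finset (Fin (n / 3) ⊕ Fin 5 × Fin (2 * n / 15))) :=
  Finset.univ.image fun p : Fin (n / 3) × Fin 5 × Fin (2 * n / 15) × Fin (2 * n / 15) =>
    ({Sum.inl p.1, Sum.inr (p.2.1, p.2.2.1), Sum.inr (p.2.1 + 1, p.2.2.2)} :
      Finset (Fin (n / 3) ⊕ Fin 5 × Fin (2 * n / 15)))

section Aux

variable {n : ℕ}

abbrev Vtx (n : ℕ) := Fin (n / 3) ⊕ Fin 5 × Fin (2 * n / 15)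

lemma fin5_ne_add_one (i : Fin 5) : i ≠ i + 1 := by revert i; decide
lemma fin5_ne_add_two (i : Fin 5) : i ≠ i + 1 + 1 := by revert i; decide

lemma mem_wheelBlowup {e : Finset (Vtx n)} :
    e ∈ wheelBlowup n ↔ ∃ a i x y,
      e = {Sum.inl a, Sum.inr (i, x), Sum.inr (i + 1, y)} := by
  simp only [wheelBlowup, Finset.mem_image, Finset.mem_univ, true_and, Prod.exists]
  constructor
  · rintro ⟨a, i, x, y, h⟩; exact ⟨a, i, x, y, h.symm⟩
  · rintro ⟨a, i, x, y, h⟩; exact ⟨a, i, x, y, h.symm⟩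

lemma edge_eq {a a' : Fin (n / 3)} {p q p' q' : Fin 5 × Fin (2 * n / 15)}
    (hpq : p ≠ q)
    (h : ({Sum.inl a, Sum.inr p, Sum.inr q} : Finset (Vtx n)) =
      {Sum.inl a', Sum.inr p', Sum.inr q'}) :
    a = a' ∧ (p = p' ∧ q = q' ∨ p = q' ∧ q = p') := by
  have ha : (Sum.inl a : Vtx n) ∈ ({Sum.inl a', Sum.inr p', Sum.inr q'} : Finset (Vtx n)) := by
    rw [← h]; simp
  have hp : (Sum.inr p : Vtx n) ∈ ({Sum.inl a', Sum.inr p', Sum.inr q'} : Finset (Vtx n)) := by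
    rw [← h]; simp
  have hq : (Sum.inr q : Vtx n) ∈ ({Sum.inl a', Sum.inr p', Sum.inr q'} : Finset (Vtx n)) := by
    rw [← h]; simp
  simp only [Finset.mem_insert, Finset.mem_singleton, Sum.inl.injEq, Sum.inr.injEq,
    reduceCtorEq, false_or, or_false] at ha hp hq
  refine ⟨ha, ?_⟩
  rcases hp with hp | hp
  · rcases hq with hq | hq
    · exact absurd (hp.trans hq.symm) hpq
    · exact Or.inl ⟨hp, hq⟩
  · rcases hq with hq | hq
    · exact Or.inr ⟨hp, hq⟩
    · exact absurd (hp.trans hq.symm) hpq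

end Aux

section Struct
variable {n : ℕ}

/-- each edge contains at most one center vertex -/
lemma one_inl {e : Finset (Vtx n)} (he : e ∈ wheelBlowup n) {a b : Fin (n / 3)}
    (ha : (Sum.inl a : Vtx n) ∈ e) (hb : (Sum.inl b : Vtx n) ∈ e) : a = b := by
  obtain ⟨c, i, x, y, rfl⟩ := mem_wheelBlowup.1 he
  simp only [Finset.mem_insert, Finset.mem_singleton, Sum.inl.injEq, reduceCtorEq,
    or_false] at ha hb
  exact ha.trans hb.symm

/-- two distinct rim vertices in an edge lie in consecutive classes -/
lemma rim_adj {e : Finset (Vtx n)} (he : e ∈ wheelBlowup n)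
    {p q : Fin 5 × Fin (2 * n / 15)}
    (hp : (Sum.inr p : Vtx n) ∈ e) (hq : (Sum.inr q : Vtx n) ∈ e) (hpq : p ≠ q) :
    q.1 = p.1 + 1 ∨ p.1 = q.1 + 1 := by
  obtain ⟨c, i, x, y, rfl⟩ := mem_wheelBlowup.1 he
  simp only [Finset.mem_insert, Finset.mem_singleton, Sum.inr.injEq, reduceCtorEq,
    false_or] at hp hq
  rcases hp with hp | hp <;> rcases hq with hq | hq
  · exact absurd (hp.trans hq.symm) hpq
  · subst hp hq; exact Or.inl rfl
  · subst hp hq; exact Or.inr rfl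
  · exact absurd (hp.trans hq.symm) hpq

/-- three pairwise distinct vertices of an edge cannot all be rim vertices -/
lemma exists_inl {e : Finset (Vtx n)} (he : e ∈ wheelBlowup n) {u v w : Vtx n}
    (hu : u ∈ e) (hv : v ∈ e) (hw : w ∈ e)
    (huv : u ≠ v) (huw : u ≠ w) (hvw : v ≠ w) :
    (∃ a, u = Sum.inl a) ∨ (∃ a, v = Sum.inl a) ∨ (∃ a, w = Sum.inl a) := by
  obtain ⟨c, i, x, y, rfl⟩ := mem_wheelBlowup.1 he
  simp only [Finset.mem_insert, Finset.mem_singleton] at hu hv hw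
  by_contra hcon
  push_neg at hcon
  obtain ⟨h1, h2, h3⟩ := hcon
  rcases hu with hu | hu | hu <;> rcases hv with hv | hv | hv <;>
    rcases hw with hw | hw | hw <;>
    first
      | exact h1 c hu
      | exact h2 c hv
      | exact h3 c hw
      | exact huv (hu.trans hv.symm)
      | exact huw (hu.trans hw.symm)
      | exact hvw (hv.trans hw.symm)

/-- no triangles in the cyclic adjacency on `Fin 5` -/
lemma c5_no_triangle : ∀ β γ δ : Fin 5,
    (γ = β + 1 ∨ β = γ + 1) → (δ = β + 1 ∨ β = δ + 1) → (δ = γ + 1 ∨ γ = δ + 1) → False := by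
  decide

set_option maxRecDepth 10000 in
lemma c5_not_3colorable : ∀ (c : Fin 3) (f : Fin 5 → Fin 3),
    (∀ i, f i ≠ c ∧ f (i + 1) ≠ c ∧ f i ≠ f (i + 1)) → False := by
  decide

end Struct

section Free
variable {n : ℕ}

lemma edge_not_all_inr {e : Finset (Vtx n)} (he : e ∈ wheelBlowup n)
    {p q r : Fin 5 × Fin (2 * n / 15)}
    (hp : (Sum.inr p : Vtx n) ∈ e) (hq : (Sum.inr q : Vtx n) ∈ e)
    (hr : (Sum.inr r : Vtx n) ∈ e)
    (hpq : (Sum.inr p : Vtx n) ≠ Sum.inr q) (hpr : (Sum.inr p : Vtx n) ≠ Sum.inr r)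
    (hqr : (Sum.inr q : Vtx n) ≠ Sum.inr r) : False := by
  rcases exists_inl he hp hq hr hpq hpr hqr with ⟨t, ht⟩ | ⟨t, ht⟩ | ⟨t, ht⟩ <;>
    simp at ht

lemma no_K43m : ∀ a b c d : Vtx n,
    a ≠ b → a ≠ c → a ≠ d → b ≠ c → b ≠ d → c ≠ d →
    ({a, b, c} : Finset (Vtx n)) ∈ wheelBlowup n →
    ({a, b, d} : Finset (Vtx n)) ∈ wheelBlowup n →
    ({a, c, d} : Finset (Vtx n)) ∈ wheelBlowup n → False := by
  intro a b c d hab hac had hbc hbd hcd h1 h2 h3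
  have ma1 : a ∈ ({a, b, c} : Finset (Vtx n)) := by simp
  have mb1 : b ∈ ({a, b, c} : Finset (Vtx n)) := by simp
  have mc1 : c ∈ ({a, b, c} : Finset (Vtx n)) := by simp
  have ma2 : a ∈ ({a, b, d} : Finset (Vtx n)) := by simp
  have mb2 : b ∈ ({a, b, d} : Finset (Vtx n)) := by simp
  have md2 : d ∈ ({a, b, d} : Finset (Vtx n)) := by simp
  have ma3 : a ∈ ({a, c, d} : Finset (Vtx n)) := by simp
  have mc3 : c ∈ ({a, c, d} : Finset (Vtx n)) := by simp
  have md3 : d ∈ ({a, c, d} : Finset (Vtx n)) := by simp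
  rcases a with a | pa <;> rcases b with b | pb <;> rcases c with c | pc <;>
    rcases d with d | pd <;>
    first
      | exact hab (congrArg Sum.inl (one_inl h1 ma1 mb1))
      | exact hac (congrArg Sum.inl (one_inl h1 ma1 mc1))
      | exact had (congrArg Sum.inl (one_inl h2 ma2 md2))
      | exact hbc (congrArg Sum.inl (one_inl h1 mb1 mc1))
      | exact hbd (congrArg Sum.inl (one_inl h2 mb2 md2))
      | exact hcd (congrArg Sum.inl (one_inl h3 mc3 md3))
      | exact edge_not_all_inr h1 ma1 mb1 mc1 hab hac hbc
      | exact edge_not_all_inr h2 ma2 mb2 md2 hab had hbd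
      | exact edge_not_all_inr h3 ma3 mc3 md3 hac had hcd
      | exact c5_no_triangle pb.1 pc.1 pd.1
          (rim_adj h1 mb1 mc1 (fun h => hbc (congrArg Sum.inr h)))
          (rim_adj h2 mb2 md2 (fun h => hbd (congrArg Sum.inr h)))
          (rim_adj h3 mc3 md3 (fun h => hcd (congrArg Sum.inr h)))

lemma no_F5 : ∀ a b c d e : Vtx n,
    a ≠ b → a ≠ c → a ≠ d → a ≠ e → b ≠ c → b ≠ d → b ≠ e → c ≠ d → c ≠ e → d ≠ e →
    ({a, b, c} : Finset (Vtx n)) ∈ wheelBlowup n →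
    ({a, b, d} : Finset (Vtx n)) ∈ wheelBlowup n →
    ({c, d, e} : Finset (Vtx n)) ∈ wheelBlowup n → False := by
  intro a b c d e hab hac had hae hbc hbd hbe hcd hce hde h1 h2 h3
  have ma1 : a ∈ ({a, b, c} : Finset (Vtx n)) := by simp
  have mb1 : b ∈ ({a, b, c} : Finset (Vtx n)) := by simp
  have mc1 : c ∈ ({a, b, c} : Finset (Vtx n)) := by simp
  have ma2 : a ∈ ({a, b, d} : Finset (Vtx n)) := by simp
  have mb2 : b ∈ ({a, b, d} : Finset (Vtx n)) := by simp
  have md2 : d ∈ ({a, b, d} : Finset (Vtx n)) := by simp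
  have mc3 : c ∈ ({c, d, e} : Finset (Vtx n)) := by simp
  have md3 : d ∈ ({c, d, e} : Finset (Vtx n)) := by simp
  have me3 : e ∈ ({c, d, e} : Finset (Vtx n)) := by simp
  rcases a with a | pa <;> rcases b with b | pb <;> rcases c with c | pc <;>
    rcases d with d | pd <;> rcases e with e | pe <;>
    first
      | exact hab (congrArg Sum.inl (one_inl h1 ma1 mb1))
      | exact hac (congrArg Sum.inl (one_inl h1 ma1 mc1))
      | exact hbc (congrArg Sum.inl (one_inl h1 mb1 mc1))
      | exact had (congrArg Sum.inl (one_inl h2 ma2 md2))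
      | exact hbd (congrArg Sum.inl (one_inl h2 mb2 md2))
      | exact hcd (congrArg Sum.inl (one_inl h3 mc3 md3))
      | exact hce (congrArg Sum.inl (one_inl h3 mc3 me3))
      | exact hde (congrArg Sum.inl (one_inl h3 md3 me3))
      | exact edge_not_all_inr h1 ma1 mb1 mc1 hab hac hbc
      | exact edge_not_all_inr h2 ma2 mb2 md2 hab had hbd
      | exact edge_not_all_inr h3 mc3 md3 me3 hcd hce hde
      | exact c5_no_triangle pb.1 pc.1 pd.1
          (rim_adj h1 mb1 mc1 (fun h => hbc (congrArg Sum.inr h)))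
          (rim_adj h2 mb2 md2 (fun h => hbd (congrArg Sum.inr h)))
          (rim_adj h3 mc3 md3 (fun h => hcd (congrArg Sum.inr h)))
      | exact c5_no_triangle pa.1 pc.1 pd.1
          (rim_adj h1 ma1 mc1 (fun h => hac (congrArg Sum.inr h)))
          (rim_adj h2 ma2 md2 (fun h => had (congrArg Sum.inr h)))
          (rim_adj h3 mc3 md3 (fun h => hcd (congrArg Sum.inr h)))

end Free

section Deg
variable {n : ℕ}

lemma fin5_add_one_ne_sub_one (j : Fin 5) : j + 1 ≠ j - 1 := by revert j; decide
lemma fin5_sub_one_ne (j : Fin 5) : j - 1 ≠ j := by revert j; decide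

lemma deg_inl (a : Fin (n / 3)) :
    degH (wheelBlowup n) (Sum.inl a) = 5 * (2 * n / 15 * (2 * n / 15)) := by
  classical
  set F : Fin 5 × Fin (2 * n / 15) × Fin (2 * n / 15) → Finset (Vtx n) :=
    fun q => {Sum.inl a, Sum.inr (q.1, q.2.1), Sum.inr (q.1 + 1, q.2.2)} with hF
  have hinj : Function.Injective F := by
    rintro ⟨i, x, y⟩ ⟨i', x', y'⟩ h
    have hpq : ((i, x) : Fin 5 × Fin (2 * n / 15)) ≠ (i + 1, y) := fun hh =>
      fin5_ne_add_one i (congrArg Prod.fst hh)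
    obtain ⟨-, h2⟩ := edge_eq hpq h
    rcases h2 with ⟨h3, h4⟩ | ⟨h3, h4⟩
    · simp only [Prod.mk.injEq] at h3 h4
      simp [Prod.ext_iff, h3.1, h3.2, h4.2]
    · simp only [Prod.mk.injEq] at h3 h4
      exact absurd (h3.1.trans (by rw [← h4.1])) (fin5_ne_add_two i)
  have hset : (wheelBlowup n).filter (fun e => (Sum.inl a : Vtx n) ∈ e) =
      Finset.univ.image F := by
    ext e
    simp only [Finset.mem_filter, Finset.mem_image, Finset.mem_univ, true_and]
    constructor
    · rintro ⟨he, hv⟩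
      obtain ⟨a', i, x, y, rfl⟩ := mem_wheelBlowup.1 he
      have haa : a = a' := by
        simp only [Finset.mem_insert, Finset.mem_singleton, Sum.inl.injEq,
          reduceCtorEq, or_false] at hv
        exact hv
      subst haa
      exact ⟨(i, x, y), rfl⟩
    · rintro ⟨⟨i, x, y⟩, rfl⟩
      exact ⟨mem_wheelBlowup.2 ⟨a, i, x, y, rfl⟩, by simp [hF]⟩
  rw [degH, hset, Finset.card_image_of_injective _ hinj, Finset.card_univ]
  simp

lemma deg_inr (j : Fin 5) (z : Fin (2 * n / 15)) :
    degH (wheelBlowup n) (Sum.inr (j, z)) = n / 3 * (2 * n / 15) + n / 3 * (2 * n / 15) := by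
  classical
  set G : (Fin (n / 3) × Fin (2 * n / 15)) ⊕ (Fin (n / 3) × Fin (2 * n / 15)) →
      Finset (Vtx n) :=
    fun q => Sum.elim
      (fun r => {Sum.inl r.1, Sum.inr (j, z), Sum.inr (j + 1, r.2)})
      (fun r => {Sum.inl r.1, Sum.inr (j - 1, r.2), Sum.inr (j, z)}) q with hG
  have d1 : ∀ w : Fin (2 * n / 15), ((j, z) : Fin 5 × Fin (2 * n / 15)) ≠ (j + 1, w) :=
    fun w hh => fin5_ne_add_one j (congrArg Prod.fst hh)
  have d2 : ∀ w : Fin (2 * n / 15), ((j - 1, w) : Fin 5 × Fin (2 * n / 15)) ≠ (j, z) :=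
    fun w hh => fin5_sub_one_ne j (congrArg Prod.fst hh)
  have hinj : Function.Injective G := by
    rintro (⟨a, w⟩ | ⟨a, w⟩) (⟨a', w'⟩ | ⟨a', w'⟩) h
    · obtain ⟨rfl, h2⟩ := edge_eq (d1 w) h
      rcases h2 with ⟨h3, h4⟩ | ⟨h3, h4⟩
      · simp only [Prod.mk.injEq] at h4; rw [h4.2]
      · simp only [Prod.mk.injEq] at h3
        exact absurd h3.1 (fin5_ne_add_one j)
    · obtain ⟨rfl, h2⟩ := edge_eq (d1 w) h
      rcases h2 with ⟨h3, h4⟩ | ⟨h3, h4⟩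
      · simp only [Prod.mk.injEq] at h4
        exact absurd h4.1.symm (fin5_ne_add_one j)
      · simp only [Prod.mk.injEq] at h4
        exact absurd h4.1 (fin5_add_one_ne_sub_one j)
    · obtain ⟨rfl, h2⟩ := edge_eq (d2 w) h
      rcases h2 with ⟨h3, h4⟩ | ⟨h3, h4⟩
      · simp only [Prod.mk.injEq] at h3
        exact absurd h3.1 (fin5_sub_one_ne j)
      · simp only [Prod.mk.injEq] at h3
        exact absurd h3.1.symm (fin5_add_one_ne_sub_one j)
    · obtain ⟨rfl, h2⟩ := edge_eq (d2 w) h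
      rcases h2 with ⟨h3, h4⟩ | ⟨h3, h4⟩
      · simp only [Prod.mk.injEq] at h3; rw [h3.2]
      · simp only [Prod.mk.injEq] at h3
        exact absurd h3.1 (fin5_sub_one_ne j)
  have hset : (wheelBlowup n).filter (fun e => (Sum.inr (j, z) : Vtx n) ∈ e) =
      Finset.univ.image G := by
    ext e
    simp only [Finset.mem_filter, Finset.mem_image, Finset.mem_univ, true_and]
    constructor
    · rintro ⟨he, hv⟩
      obtain ⟨a, i, x, y, rfl⟩ := mem_wheelBlowup.1 he
      simp only [Finset.mem_insert, Finset.mem_singleton, Sum.inr.injEq,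
        reduceCtorEq, false_or, Prod.mk.injEq] at hv
      rcases hv with ⟨hi, hx⟩ | ⟨hi, hy⟩
      · subst hi; subst hx
        exact ⟨Sum.inl (a, y), by simp [hG]⟩
      · subst hy
        obtain rfl : i = j - 1 := eq_sub_of_add_eq hi.symm
        refine ⟨Sum.inr (a, x), ?_⟩
        simp only [hG, Sum.elim_inr, sub_add_cancel]
    · rintro ⟨q, rfl⟩
      rcases q with ⟨a, w⟩ | ⟨a, w⟩
      · exact ⟨mem_wheelBlowup.2 ⟨a, j, z, w, by simp [hG]⟩, by simp [hG]⟩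
      · refine ⟨mem_wheelBlowup.2 ⟨a, j - 1, w, z, ?_⟩, by simp [hG]⟩
        simp only [hG, Sum.elim_inr, sub_add_cancel]
  rw [degH, hset, Finset.card_image_of_injective _ hinj, Finset.card_univ]
  simp

end Deg

section Final
variable {n : ℕ}

lemma inr_pair_ne (i : Fin 5) (x y : Fin (2 * n / 15)) :
    (Sum.inr (i, x) : Vtx n) ≠ Sum.inr (i + 1, y) := by
  simp only [ne_eq, Sum.inr.injEq, Prod.mk.injEq, not_and]
  exact fun h => absurd h (fin5_ne_add_one i)

lemma card3 : ∀ e ∈ wheelBlowup n, e.card = 3 := by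
  intro e he
  obtain ⟨a, i, x, y, rfl⟩ := mem_wheelBlowup.1 he
  rw [Finset.card_insert_of_notMem (by simp),
    Finset.card_insert_of_notMem (by simpa using inr_pair_ne i x y),
    Finset.card_singleton]

lemma not_tripartite (hn : 0 < n) (h15 : n % 15 = 0) : ¬ Tripartite (wheelBlowup n) := by
  rintro ⟨P, hP⟩
  have hN1 : 0 < n / 3 := by omega
  have hN2 : 0 < 2 * n / 15 := by omega
  set a0 : Fin (n / 3) := ⟨0, hN1⟩
  set x0 : Fin (2 * n / 15) := ⟨0, hN2⟩
  have key : ∀ i : Fin 5, P (Sum.inr (i, x0)) ≠ P (Sum.inl a0) ∧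
      P (Sum.inr (i + 1, x0)) ≠ P (Sum.inl a0) ∧
      P (Sum.inr (i, x0)) ≠ P (Sum.inr (i + 1, x0)) := by
    intro i
    have he : ({Sum.inl a0, Sum.inr (i, x0), Sum.inr (i + 1, x0)} : Finset (Vtx n)) ∈
        wheelBlowup n := mem_wheelBlowup.2 ⟨a0, i, x0, x0, rfl⟩
    exact ⟨hP _ he _ (by simp) _ (by simp) (by simp),
      hP _ he _ (by simp) _ (by simp) (by simp),
      hP _ he _ (by simp) _ (by simp) (inr_pair_ne i x0 x0)⟩
  exact c5_not_3colorable (P (Sum.inl a0)) (fun i => P (Sum.inr (i, x0))) key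

end Final

/-- For `n ≡ 0 (mod 15)`, the blowup `W₅³[n/3, 2n/15, …, 2n/15]` is an `n`-vertex
3-graph which is `{K₄³⁻, F₅}`-free, has minimum degree exactly `4n²/45`, and is not
3-partite. -/
theorem wheel_blowup_extremal (n : ℕ) (hn : 0 < n) (h15 : n % 15 = 0) :
    Fintype.card (Fin (n / 3) ⊕ Fin 5 × Fin (2 * n / 15)) = n ∧
    (∀ e ∈ wheelBlowup n, e.card = 3) ∧
    ¬ HasK43m (wheelBlowup n) ∧
    ¬ HasF5 (wheelBlowup n) ∧
    (∀ v, 4 * (n : ℝ) ^ 2 / 45 ≤ (degH (wheelBlowup n) v : ℝ)) ∧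
    (∃ v, (degH (wheelBlowup n) v : ℝ) = 4 * (n : ℝ) ^ 2 / 45) ∧
    ¬ Tripartite (wheelBlowup n) := by
  have hdvd : n = 15 * (n / 15) := by omega
  set m := n / 15 with hm
  have hN1 : n / 3 = 5 * m := by omega
  have hN2 : 2 * n / 15 = 2 * m := by omega
  have hnm : (n : ℝ) = 15 * (m : ℝ) := by exact_mod_cast hdvd
  have hdeg : ∀ v : Vtx n, (degH (wheelBlowup n) v : ℝ) = 4 * (n : ℝ) ^ 2 / 45 := by
    intro v
    rcases v with a | ⟨j, zz⟩
    · rw [deg_inl a, hN2, hnm]; push_cast; ring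
    · rw [deg_inr j zz, hN1, hN2, hnm]; push_cast; ring
  refine ⟨?_, card3, ?_, ?_, ?_, ?_, not_tripartite hn h15⟩
  · rw [Fintype.card_sum, Fintype.card_prod, Fintype.card_fin, Fintype.card_fin,
      Fintype.card_fin]
    omega
  · rintro ⟨a, b, c, d, hab, hac, had, hbc, hbd, hcd, h1, h2, h3⟩
    exact no_K43m a b c d hab hac had hbc hbd hcd h1 h2 h3
  · rintro ⟨a, b, c, d, e, hab, hac, had, hae, hbc, hbd, hbe, hcd, hce, hde, h1, h2, h3⟩
    exact no_F5 a b c d e hab hac had hae hbc hbd hbe hcd hce hde h1 h2 h3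
  · exact fun v => le_of_eq (hdeg v).symm
  · exact ⟨Sum.inl ⟨0, by omega⟩, hdeg _⟩
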